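/- For every real α ≥ 1 there exists σ₀ > 0 such that for every real σ with 0 < |σ| ≤ σ₀ and every complex number λ satisfying λ² − (1 + iσ(α+1))λ + iσα = 0, one has |λ| < 1. -/

import Mathlib

private lemma amwu_vbound (α s v w m : ℝ) (hα : 1 ≤ α) (hm : 1 ≤ m)
    (h1' : v * m = -(s * α * w))
    (hy2 : w^2 ≤ (2*α+1)^2 * s^2) :
    v^2 ≤ α^2*(2*α+1)^2*s^4 := by
  have hvn : v^2 * m^2 = s^2 * α^2 * w^2 := by
    rw [show v^2*m^2 = (v*m)^2 by ring, h1']; ring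
  have h : v^2 * m^2 ≤ α^2*(2*α+1)^2*s^4 := by
    nlinarith [mul_le_mul_of_nonneg_left hy2 (by positivity : (0:ℝ) ≤ s^2*α^2)]
  nlinarith [mul_nonneg (sq_nonneg v) (by nlinarith : (0:ℝ) ≤ m^2 - 1)]

private lemma amwu_ybound (α s x y : ℝ) (hα : 1 ≤ α)
    (hn : 1 ≤ x^2 + y^2)
    (h2 : y*(x^2+y^2) - s*((α+1)*(x^2+y^2) - α*x) = 0)
    (hq_lo : x^2 + y^2 ≤ (α+1)*(x^2+y^2) - α*x)
    (hq_up : (α+1)*(x^2+y^2) - α*x ≤ (2*α+1)*(x^2+y^2)) :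
    y^2 ≤ (2*α+1)^2 * s^2 := by
  set n := x^2 + y^2 with hndef
  set q := (α+1)*(x^2+y^2) - α*x with hqdef
  have hnpos : (0:ℝ) < n := by linarith
  have hn2 : (0:ℝ) < n^2 := by positivity
  have h2' : y * n = s * q := by linarith
  have hq2 : q^2 ≤ (2*α+1)^2 * n^2 := by nlinarith
  have hyn : y^2 * n^2 = s^2 * q^2 := by
    rw [show y^2*n^2 = (y*n)^2 by ring, h2']; ring
  have h : y^2 * n^2 ≤ (2*α+1)^2*s^2 * n^2 := by nlinarith [sq_nonneg s]
  exact le_of_mul_le_mul_right h hn2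

private lemma amwu_ident (α s x y : ℝ)
    (h1 : (x-1)*(x^2+y^2) + s*α*y = 0)
    (h2 : y*(x^2+y^2) - s*((α+1)*(x^2+y^2) - α*x) = 0) :
    (x^2+y^2)^2*(2*(x-1)+(x-1)^2+y^2)
      = s^2*(((α+1)*(x^2+y^2) - α*x)^2 - 2*α*((α+1)*(x^2+y^2) - α*x) + α^2*y^2) := by
  linear_combination ((x-1)*(x^2+y^2) - s*α*y + 2*(x^2+y^2))*h1
    + (y*(x^2+y^2) + s*((α+1)*(x^2+y^2)-α*x) - 2*s*α)*h2

private lemma amwu_qbound (α s v Y : ℝ) (hα : 1 ≤ α)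
    (hv2 : v^2 ≤ α^2*(2*α+1)^2*s^4) (hY : Y ≤ (2*α+1)^2*s^2)
    (hs2 : s^2*(64*(α+2)^4) ≤ 1) :
    (α+2)*v + (α+1)*(v^2+Y) ≤ 1/4 := by
  have hbnn : (0:ℝ) ≤ α*(2*α+1)*s^2 := by positivity
  have hv_up : v ≤ α*(2*α+1)*s^2 := by nlinarith [hv2, hbnn, sq_nonneg v]
  have hs2nn : (0:ℝ) ≤ s^2*(64*(α+2)^4) := by positivity
  have hs4 : s^4*(64*(α+2)^4)^2 ≤ 1 := by nlinarith [hs2, hs2nn]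
  have t1 : (α+2)*(α*(2*α+1)*s^2) ≤ 1/32 := by
    nlinarith [mul_nonneg (sq_nonneg s) (show (0:ℝ) ≤ 2*(α+2)^4 - (α+2)*α*(2*α+1) by nlinarith)]
  have t2 : (α+1)*Y ≤ 1/16 := by
    nlinarith [mul_nonneg (sq_nonneg s) (show (0:ℝ) ≤ 4*(α+2)^4 - (α+1)*(2*α+1)^2 by nlinarith),
      mul_le_mul_of_nonneg_left hY (by linarith : (0:ℝ) ≤ α+1)]
  have t3 : (α+1)*v^2 ≤ 1/16 := by
    nlinarith [mul_nonneg (mul_nonneg (sq_nonneg s) (sq_nonneg s))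
        (show (0:ℝ) ≤ (64*(α+2)^4)^2 - 16*(α+1)*α^2*(2*α+1)^2 by nlinarith),
      mul_le_mul_of_nonneg_left hv2 (by linarith : (0:ℝ) ≤ α+1), hs4]
  nlinarith [mul_le_mul_of_nonneg_left hv_up (by linarith : (0:ℝ) ≤ α+2), t2, t3, t1]

private lemma amwu_final (α q Y : ℝ) (hα : 1 ≤ α)
    (hq1 : 1 ≤ q) (hq54 : q ≤ 5/4)
    (hY : α^2 * Y ≤ 1/16)
    (hQ : 0 ≤ q^2 - 2*α*q + α^2*Y) : False := by
  nlinarith [mul_nonneg (by linarith : (0:ℝ) ≤ q - 1) (by linarith : (0:ℝ) ≤ 2*α - q)]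

set_option maxHeartbeats 1000000 in
private lemma amwu_key (α s x y : ℝ) (hα : 1 ≤ α) (hs0 : s ≠ 0)
    (hs2 : s^2 * (64*(α+2)^4) ≤ 1)
    (e1 : x^2 - y^2 - x + s*(α+1)*y = 0)
    (e2 : 2*x*y - y - s*(α+1)*x + s*α = 0) :
    x^2 + y^2 < 1 := by
  by_contra hcon
  push_neg at hcon
  have hn : 1 ≤ x^2 + y^2 := hcon
  have h1 : (x-1)*(x^2+y^2) + s*α*y = 0 := by linear_combination x*e1 + y*e2
  have h2 : y*(x^2+y^2) - s*((α+1)*(x^2+y^2) - α*x) = 0 := by linear_combination x*e2 - y*e1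
  have hspos : 0 < s^2 := by positivity
  have hx_up : x ≤ x^2 + y^2 := by nlinarith [sq_nonneg (x-1)]
  have hx_lo : -(x^2+y^2) ≤ x := by nlinarith [sq_nonneg (x+1)]
  have hq_lo : x^2 + y^2 ≤ (α+1)*(x^2+y^2) - α*x := by nlinarith
  have hq_up : (α+1)*(x^2+y^2) - α*x ≤ (2*α+1)*(x^2+y^2) := by nlinarith
  have hy2 : y^2 ≤ (2*α+1)^2 * s^2 := amwu_ybound α s x y hα hn h2 hq_lo hq_up
  have h1' : (x-1) * (x^2+y^2) = -(s * α * y) := by linarith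
  have hv2 : (x-1)^2 ≤ α^2*(2*α+1)^2*s^4 := amwu_vbound α s (x-1) y (x^2+y^2) hα hn h1' hy2
  -- extract nonnegativity of the quadratic form in q
  have hF0 : 0 ≤ 2*(x-1)+(x-1)^2+y^2 := by nlinarith
  have hT := amwu_ident α s x y h1 h2
  have h0 : 0 ≤ s^2*(((α+1)*(x^2+y^2) - α*x)^2 - 2*α*((α+1)*(x^2+y^2) - α*x) + α^2*y^2) := by
    rw [← hT]; positivity
  have hQ : 0 ≤ ((α+1)*(x^2+y^2) - α*x)^2 - 2*α*((α+1)*(x^2+y^2) - α*x) + α^2*y^2 :=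
    le_of_mul_le_mul_left (by simpa using h0) hspos
  -- bounds on q
  have hq1 : 1 ≤ (α+1)*(x^2+y^2) - α*x := by linarith
  have hq54 : (α+1)*(x^2+y^2) - α*x ≤ 5/4 := by
    have hb := amwu_qbound α s (x-1) (y^2) hα hv2 hy2 hs2
    nlinarith [hb]
  have hY : α^2 * y^2 ≤ 1/16 := by
    nlinarith [mul_nonneg (sq_nonneg s) (show (0:ℝ) ≤ 4*(α+2)^4 - α^2*(2*α+1)^2 by nlinarith),
      mul_le_mul_of_nonneg_left hy2 (sq_nonneg α)]
  exact amwu_final α ((α+1)*(x^2+y^2) - α*x) (y^2) hα hq1 hq54 hY hQ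

/-- **Spectral estimate for the AMWU Jacobian** (key step of Theorem 17 in the paper).
For every `α ≥ 1` there is `σ₀ > 0` such that for all real `σ` with `0 < |σ| ≤ σ₀`,
every complex root `λ` of `λ² − (1 + iσ(α+1))λ + iσα = 0` satisfies `|λ| < 1`. -/
theorem amwu_jacobian_root_bound (α : ℝ) (hα : 1 ≤ α) :
    ∃ σ₀ : ℝ, 0 < σ₀ ∧ ∀ σ : ℝ, 0 < |σ| → |σ| ≤ σ₀ →
      ∀ lam : ℂ,
        lam ^ 2 - (1 + Complex.I * (σ : ℂ) * ((α : ℂ) + 1)) * lam + Complex.I * (σ : ℂ) * (α : ℂ) = 0 →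
        ‖lam‖ < 1 := by
  have hA : (0:ℝ) < 8*(α+2)^2 := by positivity
  refine ⟨1/(8*(α+2)^2), by positivity, ?_⟩
  intro σ hσpos hσle lam heq
  have hs0 : σ ≠ 0 := by
    intro h; rw [h] at hσpos; simp at hσpos
  have habs : |σ| * (8*(α+2)^2) ≤ 1 := by
    have := (le_div_iff₀ hA).mp hσle
    linarith
  have hs2 : σ^2 * (64*(α+2)^4) ≤ 1 := by
    have h1 : (abs σ * (8*(α+2)^2))^2 ≤ 1 := by
      nlinarith [habs, mul_nonneg (abs_nonneg σ) hA.le]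
    have h2 : (abs σ * (8*(α+2)^2))^2 = σ^2*(64*(α+2)^4) := by
      rw [mul_pow, sq_abs]; ring
    linarith [h2 ▸ h1]
  rw [Complex.ext_iff] at heq
  obtain ⟨hre, him⟩ := heq
  simp [pow_two, Complex.mul_re, Complex.mul_im, Complex.add_re, Complex.add_im] at hre him
  have e1 : lam.re^2 - lam.im^2 - lam.re + σ*(α+1)*lam.im = 0 := by nlinarith [hre, him]
  have e2 : 2*lam.re*lam.im - lam.im - σ*(α+1)*lam.re + σ*α = 0 := by nlinarith [hre, him]
  have hkey := amwu_key α σ lam.re lam.im hα hs0 hs2 e1 e2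
  have hsq := Complex.sq_norm lam
  rw [Complex.normSq_apply] at hsq
  nlinarith [norm_nonneg lam, hsq, hkey]
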